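/- Let p be a prime, let d ≥ 2, let i ≠ j be two indices in {1, …, d}, and let f, g ∈ ℤ_p[X] be monic polynomials of positive degree with coefficients in the p-adic integers. Then the elements f(X_i) and g(X_j) of the formal power series ring ℤ_p⟦X₁, …, X_d⟧ have no common divisor that is a non-unit: any element of ℤ_p⟦X₁, …, X_d⟧ dividing both f(X_i) and g(X_j) is a unit. -/

import Mathlib

open MvPowerSeries Finsupp

lemma coeff_aeval_X {R : Type*} [CommRing R] {σ : Type*} [DecidableEq σ]
    (q : Polynomial R) (k : σ) (dd : σ →₀ ℕ) :
    MvPowerSeries.coeff dd (Polynomial.aeval (MvPowerSeries.X k) q) =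
      if dd = Finsupp.single k (dd k) then q.coeff (dd k) else 0 := by
  rw [Polynomial.aeval_def, Polynomial.eval₂_eq_sum, Polynomial.sum, map_sum]
  have : ∀ e ∈ q.support,
      MvPowerSeries.coeff dd (algebraMap R (MvPowerSeries σ R) (q.coeff e)
        * MvPowerSeries.X k ^ e) =
      if e = dd k then (if dd = Finsupp.single k (dd k) then q.coeff (dd k) else 0) else 0 := by
    intro e _
    rw [MvPowerSeries.algebraMap_apply, Algebra.algebraMap_self_apply,
      MvPowerSeries.coeff_C_mul, MvPowerSeries.coeff_X_pow]
    by_cases he : e = dd k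
    · subst he
      by_cases hdd : dd = Finsupp.single k (dd k)
      · simp [← hdd]
      · simp [hdd, fun h => hdd h]
    · rw [if_neg (fun hc => he (by rw [hc, Finsupp.single_eq_same])), mul_zero, if_neg he]
  rw [Finset.sum_congr rfl this, Finset.sum_ite_eq' q.support (dd k)]
  by_cases hm : dd k ∈ q.support
  · rw [if_pos hm]
  · rw [if_neg hm]
    rw [Polynomial.notMem_support_iff] at hm
    simp [hm]

lemma map_aeval_X {R S : Type*} [CommRing R] [CommRing S] {σ : Type*}
    (ψ : R →+* S) (q : Polynomial R) (k : σ) :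
    MvPowerSeries.map ψ (Polynomial.aeval (MvPowerSeries.X k) q) =
      Polynomial.aeval (MvPowerSeries.X k) (q.map ψ) := by
  rw [Polynomial.aeval_def, Polynomial.aeval_def, Polynomial.hom_eval₂,
    Polynomial.eval₂_map, MvPowerSeries.map_X]
  congr 1
  ext a
  simp [MvPowerSeries.algebraMap_apply]

/-- Let `p` be a prime, `d ≥ 2`, `i ≠ j` indices, and `f, g ∈ ℤ_p[X]` monic polynomials of
positive degree. Then in `ℤ_p⟦X₁, …, X_d⟧` the elements `f(Xᵢ)` and `g(Xⱼ)` have no common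
non-unit divisor. -/
theorem stmt_11 (p : ℕ) [Fact p.Prime] (d : ℕ) (hd : 2 ≤ d) (i j : Fin d) (hij : i ≠ j)
    (f g : Polynomial ℤ_[p]) (hf : f.Monic) (hg : g.Monic)
    (hfdeg : 0 < f.natDegree) (hgdeg : 0 < g.natDegree) :
    ∀ h : MvPowerSeries (Fin d) ℤ_[p],
      h ∣ Polynomial.aeval (MvPowerSeries.X i) f →
      h ∣ Polynomial.aeval (MvPowerSeries.X j) g → IsUnit h := by
  intro h hdf hdg
  classical
  set φ : MvPowerSeries (Fin d) ℤ_[p] →+* MvPowerSeries (Fin d) (ZMod p) :=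
    MvPowerSeries.map (PadicInt.toZMod) with hφ
  set fb : Polynomial (ZMod p) := f.map PadicInt.toZMod with hfb
  set gb : Polynomial (ZMod p) := g.map PadicInt.toZMod with hgb
  have hfbm : fb.Monic := hf.map _
  have hgbm : gb.Monic := hg.map _
  -- the reduced divisibilities
  have hdf' : φ h ∣ Polynomial.aeval (MvPowerSeries.X i) fb := by
    rw [hfb, ← map_aeval_X]
    exact map_dvd φ hdf
  have hdg' : φ h ∣ Polynomial.aeval (MvPowerSeries.X j) gb := by
    rw [hgb, ← map_aeval_X]
    exact map_dvd φ hdg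
  -- nonvanishing of the reduced images
  have hFne : (Polynomial.aeval (MvPowerSeries.X i) fb : MvPowerSeries (Fin d) (ZMod p)) ≠ 0 := by
    intro h0
    have := coeff_aeval_X fb i (Finsupp.single i fb.natDegree)
    rw [h0, map_zero, Finsupp.single_eq_same, if_pos rfl] at this
    exact one_ne_zero (by rw [← hfbm.coeff_natDegree, ← this])
  have hGne : (Polynomial.aeval (MvPowerSeries.X j) gb : MvPowerSeries (Fin d) (ZMod p)) ≠ 0 := by
    intro h0
    have := coeff_aeval_X gb j (Finsupp.single j gb.natDegree)
    rw [h0, map_zero, Finsupp.single_eq_same, if_pos rfl] at this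
    exact one_ne_zero (by rw [← hgbm.coeff_natDegree, ← this])
  -- lex order analysis
  have hhne : φ h ≠ 0 := by
    intro h0
    obtain ⟨a, ha⟩ := hdf'
    rw [h0, zero_mul] at ha
    exact hFne ha
  obtain ⟨u, hu⟩ := MvPowerSeries.exists_finsupp_eq_lexOrder_of_ne_zero hhne
  have key : ∀ (k : Fin d) (q : Polynomial (ZMod p)),
      (Polynomial.aeval (MvPowerSeries.X k) q : MvPowerSeries (Fin d) (ZMod p)) ≠ 0 →
      φ h ∣ Polynomial.aeval (MvPowerSeries.X k) q → ∀ s, s ≠ k → u s = 0 := by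
    intro k q hqne hdvd s hsk
    obtain ⟨a, ha⟩ := hdvd
    have hane : a ≠ 0 := by
      rintro rfl
      rw [mul_zero] at ha
      exact hqne ha
    obtain ⟨v, hv⟩ := MvPowerSeries.exists_finsupp_eq_lexOrder_of_ne_zero hane
    obtain ⟨w, hw⟩ := MvPowerSeries.exists_finsupp_eq_lexOrder_of_ne_zero hqne
    have hmul := MvPowerSeries.lexOrder_mul (φ h) a
    rw [← ha, hu, hv, hw] at hmul
    have hadd : w = u + v := by
      rw [← WithTop.coe_add, WithTop.coe_eq_coe, ← toLex_add] at hmul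
      exact toLex.injective hmul
    have hwk : w = Finsupp.single k (w k) := by
      have hcw := MvPowerSeries.coeff_ne_zero_of_lexOrder hw.symm
      rw [coeff_aeval_X] at hcw
      by_contra hne
      rw [if_neg hne] at hcw
      exact hcw rfl
    have hws : w s = 0 := by
      rw [hwk]
      exact Finsupp.single_eq_of_ne hsk
    have : u s + v s = 0 := by
      rw [← Finsupp.add_apply, ← hadd, hws]
    exact Nat.eq_zero_of_add_eq_zero_right this
  have hu0 : u = 0 := by
    ext s
    rcases ne_or_eq s i with hsi | rfl
    · exact key i fb hFne hdf' s hsi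
    · exact key j gb hGne hdg' s hij
  have hcoeff : MvPowerSeries.coeff 0 (φ h) ≠ 0 := by
    apply MvPowerSeries.coeff_ne_zero_of_lexOrder
    rw [hu, hu0]
  rw [hφ, MvPowerSeries.coeff_map] at hcoeff
  rw [MvPowerSeries.isUnit_iff_constantCoeff]
  by_contra hnu
  have hmem : MvPowerSeries.constantCoeff h ∈ IsLocalRing.maximalIdeal ℤ_[p] := by
    rw [IsLocalRing.mem_maximalIdeal]
    exact hnu
  rw [← PadicInt.ker_toZMod, RingHom.mem_ker] at hmem
  exact hcoeff (by rw [← hmem, MvPowerSeries.coeff_zero_eq_constantCoeff])
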